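/- Bayesian re-sampling identity (n users with an aggregator, Claim that M₂(D^n) is identical to M₁(D^n)): let X, Y₁, Y₂, Z be countable types, n a positive integer, D a probability mass function on X, R_1, …, R_n : X → PMF(Y₁ × Y₂), and A : (Y₁)^n → PMF(Z). Write R_{i,1}(x)(y₁) = ∑_{y₂} R_i(x)(y₁,y₂). Process M₁: independently for each i ∈ [n], sample x_i ~ D and (y_{i,1}, y_{i,2}) ~ R_i(x_i); then sample z ~ A(y_{1,1},…,y_{n,1}); output (z, y_{1,2}, …, y_{n,2}). Process M₂: independently for each i, sample x_i ~ D and y_{i,1} with law R_{i,1}(x_i); sample z ~ A(y_{1,1},…,y_{n,1}); then independently for each i, sample x̂_i from the posterior law Pr[x̂_i = v] = D(v)·R_{i,1}(v)(y_{i,1}) / ∑_w D(w)·R_{i,1}(w)(y_{i,1}) and sample y_{i,2} from the conditional law Pr[y_{i,2} = u] = R_i(x̂_i)(y_{i,1},u)/R_{i,1}(x̂_i)(y_{i,1}); output (z, y_{1,2}, …, y_{n,2}). Then the output distributions of M₁ and M₂ on Z × (Y₂)^n are identical. -/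

import Mathlib

open scoped ENNReal

private lemma bayes_key {X : Type*} [Countable X] (d m r : X → ℝ)
    (hd : ∀ v, 0 ≤ d v) (hr : ∀ v, 0 ≤ r v) (hrm : ∀ v, r v ≤ m v)
    (hsum : Summable (fun v => d v * m v)) :
    (∑' w, d w * m w) *
      ∑' v, (d v * m v / ∑' w, d w * m w) * (r v / m v) = ∑' v, d v * r v := by
  set M := ∑' w, d w * m w with hMdef
  rw [← tsum_mul_left]
  refine tsum_congr fun v => ?_
  have hm0 : ∀ w, 0 ≤ m w := fun w => le_trans (hr w) (hrm w)
  by_cases hM : M = 0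
  · have hle : d v * m v ≤ M := Summable.le_tsum hsum v (fun w _ => mul_nonneg (hd w) (hm0 w))
    have hdm : d v * m v = 0 :=
      le_antisymm (hM ▸ hle) (mul_nonneg (hd v) (hm0 v))
    have : d v * r v = 0 := by
      rcases mul_eq_zero.mp hdm with h | h
      · simp [h]
      · have : r v = 0 := le_antisymm (h ▸ hrm v) (hr v)
        simp [this]
    simp [hM, this]
  · by_cases hm : m v = 0
    · have hrv : r v = 0 := le_antisymm (hm ▸ hrm v) (hr v)
      simp [hm, hrv]
    · field_simp

/-- Bayesian re-sampling identity (`n` users with an aggregator `A`): the output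
law of process `M₂` (sample each first message from the marginal, aggregate via
`A`, then re-sample each user's data from the posterior given their first
message and generate the second message from the conditional law) equals the
output law of process `M₁` (each user samples both messages from `R i`
directly, then `A` aggregates the first messages), as distributions on
`Z × (Y₂)ⁿ`. (The mass functions agree pointwise; by Lean's convention
division by zero is zero, so terms with zero denominator contribute zero.) -/
theorem bayesian_resampling_n {X Y₁ Y₂ Z : Type*}
    [Countable X] [Countable Y₁] [Countable Y₂] [Countable Z]
    (n : ℕ) (hn : 0 < n) (D : PMF X)
    (R : Fin n → X → PMF (Y₁ × Y₂)) (A : (Fin n → Y₁) → PMF Z) :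
    ∀ (z : Z) (u : Fin n → Y₂),
      (∑' y : Fin n → Y₁,
        (∏ i : Fin n, ∑' x : X, (D x).toReal * ∑' y₂ : Y₂, (R i x (y i, y₂)).toReal) *
          (A y z).toReal *
          ∏ i : Fin n,
            ∑' v : X,
              ((D v).toReal * (∑' y₂ : Y₂, (R i v (y i, y₂)).toReal) /
                  ∑' w : X, (D w).toReal * ∑' y₂ : Y₂, (R i w (y i, y₂)).toReal) *
                ((R i v (y i, u i)).toReal / ∑' y₂ : Y₂, (R i v (y i, y₂)).toReal)) =
      ∑' y : Fin n → Y₁,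
        (∏ i : Fin n, ∑' x : X, (D x).toReal * (R i x (y i, u i)).toReal) *
          (A y z).toReal := by
  intro z u
  refine tsum_congr fun y => ?_
  -- per-coordinate facts
  have hEnn : ∀ (i : Fin n) (v : X), (∑' y₂ : Y₂, R i v (y i, y₂)) ≠ ⊤ := by
    intro i v
    refine ne_top_of_le_ne_top ?_
      (ENNReal.tsum_comp_le_tsum_of_injective
        (f := fun y₂ : Y₂ => ((y i, y₂) : Y₁ × Y₂))
        (by intro a b h; exact (Prod.mk.injEq _ _ _ _).mp h |>.2) (R i v))
    rw [(R i v).tsum_coe]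
    exact ENNReal.one_ne_top
  have hmsum : ∀ (i : Fin n) (v : X),
      Summable (fun y₂ : Y₂ => (R i v (y i, y₂)).toReal) := by
    intro i v
    exact ENNReal.summable_toReal (hEnn i v)
  have hmval : ∀ (i : Fin n) (v : X),
      (∑' y₂ : Y₂, (R i v (y i, y₂)).toReal) = (∑' y₂ : Y₂, R i v (y i, y₂)).toReal := by
    intro i v
    exact (ENNReal.tsum_toReal_eq (fun _ => PMF.apply_ne_top _ _)).symm
  have hmle1 : ∀ (i : Fin n) (v : X), (∑' y₂ : Y₂, (R i v (y i, y₂)).toReal) ≤ 1 := by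
    intro i v
    rw [hmval]
    refine ENNReal.toReal_le_of_le_ofReal zero_le_one ?_
    rw [ENNReal.ofReal_one]
    refine le_trans (ENNReal.tsum_comp_le_tsum_of_injective
        (f := fun y₂ : Y₂ => ((y i, y₂) : Y₁ × Y₂))
        (by intro a b h; exact (Prod.mk.injEq _ _ _ _).mp h |>.2) (R i v)) ?_
    rw [(R i v).tsum_coe]
  have hDsum : Summable (fun v : X => (D v).toReal) :=
    ENNReal.summable_toReal (by rw [D.tsum_coe]; exact ENNReal.one_ne_top)
  have key : ∀ i : Fin n,
      (∑' x : X, (D x).toReal * ∑' y₂ : Y₂, (R i x (y i, y₂)).toReal) *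
        (∑' v : X,
          ((D v).toReal * (∑' y₂ : Y₂, (R i v (y i, y₂)).toReal) /
              ∑' w : X, (D w).toReal * ∑' y₂ : Y₂, (R i w (y i, y₂)).toReal) *
            ((R i v (y i, u i)).toReal / ∑' y₂ : Y₂, (R i v (y i, y₂)).toReal)) =
      ∑' x : X, (D x).toReal * (R i x (y i, u i)).toReal := by
    intro i
    refine bayes_key (fun v => (D v).toReal)
      (fun v => ∑' y₂ : Y₂, (R i v (y i, y₂)).toReal)
      (fun v => (R i v (y i, u i)).toReal)
      (fun v => ENNReal.toReal_nonneg) (fun v => ENNReal.toReal_nonneg)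
      (fun v => Summable.le_tsum (hmsum i v) (u i) (fun _ _ => ENNReal.toReal_nonneg)) ?_
    refine Summable.of_nonneg_of_le
      (fun v => mul_nonneg ENNReal.toReal_nonneg
        (tsum_nonneg (fun _ => ENNReal.toReal_nonneg)))
      (fun v => ?_) hDsum
    calc (D v).toReal * ∑' y₂ : Y₂, (R i v (y i, y₂)).toReal
        ≤ (D v).toReal * 1 := mul_le_mul_of_nonneg_left (hmle1 i v) ENNReal.toReal_nonneg
      _ = (D v).toReal := mul_one _
  calc (∏ i : Fin n, ∑' x : X, (D x).toReal * ∑' y₂ : Y₂, (R i x (y i, y₂)).toReal) *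
          (A y z).toReal *
          ∏ i : Fin n,
            ∑' v : X,
              ((D v).toReal * (∑' y₂ : Y₂, (R i v (y i, y₂)).toReal) /
                  ∑' w : X, (D w).toReal * ∑' y₂ : Y₂, (R i w (y i, y₂)).toReal) *
                ((R i v (y i, u i)).toReal / ∑' y₂ : Y₂, (R i v (y i, y₂)).toReal)
      = (∏ i : Fin n,
          (∑' x : X, (D x).toReal * ∑' y₂ : Y₂, (R i x (y i, y₂)).toReal) *
            ∑' v : X,
              ((D v).toReal * (∑' y₂ : Y₂, (R i v (y i, y₂)).toReal) /
                  ∑' w : X, (D w).toReal * ∑' y₂ : Y₂, (R i w (y i, y₂)).toReal) *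
                ((R i v (y i, u i)).toReal / ∑' y₂ : Y₂, (R i v (y i, y₂)).toReal)) *
          (A y z).toReal := by
        rw [Finset.prod_mul_distrib]; ring
    _ = (∏ i : Fin n, ∑' x : X, (D x).toReal * (R i x (y i, u i)).toReal) *
          (A y z).toReal := by
        rw [Finset.prod_congr rfl (fun i _ => key i)]
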